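/- Let G be a totally ordered abelian group, let Γ be the monoid of nonnegative elements of G (elements g with g ≥ 0), and let D be an integral domain equipped with a nontrivial Γ-grading (i.e., D = ⊕_{g∈Γ} D_g with D_g · D_h ⊆ D_{g+h}, and D ≠ D₀). Then D is not Egyptian. -/

import Mathlib

universe u

/-- A commutative ring `D` is *Egyptian* if every nonzero `d : D` is a sum of reciprocals
`d = 1/d₁ + ⋯ + 1/dₙ` of finitely many pairwise distinct nonzero elements `dᵢ` of `D`, the
equality holding in any field in which `D` embeds.  (For an integral domain `D` this is
equivalent to the usual definition, in which the equality is required in the fraction field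
of `D`: such an equality holds in one field containing `D` iff it holds in all of them.) -/
def IsEgyptian (D : Type u) [CommRing D] : Prop :=
  ∀ d : D, d ≠ 0 → ∃ s : Finset D, (∀ i ∈ s, i ≠ 0) ∧
    ∀ (K : Type u) [Field K] (φ : D →+* K), Function.Injective φ →
      φ d = ∑ i ∈ s, (φ i)⁻¹

/-- A domain `D` is *generically Egyptian* if `D[1/f]` is Egyptian for some nonzero `f : D`. -/
def IsGenericallyEgyptian (D : Type u) [CommRing D] : Prop :=
  ∃ f : D, f ≠ 0 ∧ IsEgyptian (Localization.Away f)

/-- A domain `D` is *locally Egyptian* if there is a finite set of generators of the unit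
ideal of `D` such that inverting any one of them yields an Egyptian ring. -/
def IsLocallyEgyptian (D : Type u) [CommRing D] : Prop :=
  ∃ s : Finset D, Ideal.span (s : Set D) = ⊤ ∧
    ∀ f ∈ s, IsEgyptian (Localization.Away f)

open DirectSum

set_option linter.unusedSectionVars false

section Aux
variable {G : Type*} [AddCommGroup G] [LinearOrder G] [IsOrderedAddMonoid G] [DecidableEq G]
  {Γ : AddSubmonoid G}
  {D : Type*} [CommRing D] [IsDomain D]
  {𝒜 : Γ → AddSubgroup D} [DirectSum.Decomposition 𝒜]

/-- The `k`-th homogeneous component, as an additive map `D →+ D`. -/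
noncomputable def comp (𝒜 : Γ → AddSubgroup D) [DirectSum.Decomposition 𝒜] (k : Γ) : D →+ D :=
  ((𝒜 k).subtype).comp ((DFinsupp.evalAddMonoidHom k).comp (decomposeAddEquiv 𝒜).toAddMonoidHom)

omit [IsDomain D] in
lemma comp_apply (k : Γ) (x : D) : comp 𝒜 k x = (decompose 𝒜 x k : D) := rfl

omit [IsDomain D] in
lemma comp_mem (k : Γ) (x : D) : comp 𝒜 k x ∈ 𝒜 k := (decompose 𝒜 x k).2

/-- The support of the decomposition. -/
noncomputable def supp (𝒜 : Γ → AddSubgroup D) [DirectSum.Decomposition 𝒜] (x : D) : Finset Γ :=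
  letI : ∀ (i : Γ) (x : 𝒜 i), Decidable (x ≠ 0) := fun _ _ => Classical.dec _
  (decompose 𝒜 x).support

omit [IsDomain D] in
lemma mem_supp_iff (k : Γ) (x : D) : k ∈ supp 𝒜 x ↔ comp 𝒜 k x ≠ 0 := by
  classical
  simp [supp, comp_apply, DFinsupp.mem_support_iff]

omit [IsDomain D] in
lemma sum_supp (x : D) : ∑ k ∈ supp 𝒜 x, comp 𝒜 k x = x := by
  letI : ∀ (i : Γ) (x : 𝒜 i), Decidable (x ≠ 0) := fun _ _ => Classical.dec _
  exact DirectSum.sum_support_decompose 𝒜 x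

omit [IsDomain D] in
lemma supp_nonempty {x : D} (hx : x ≠ 0) : (supp 𝒜 x).Nonempty := by
  by_contra h
  rw [Finset.not_nonempty_iff_eq_empty] at h
  apply hx
  rw [← sum_supp (𝒜 := 𝒜) x, h, Finset.sum_empty]

omit [IsDomain D] in
lemma comp_of_mem {g k : Γ} {x : D} (hx : x ∈ 𝒜 g) :
    comp 𝒜 k x = if g = k then x else 0 := by
  rw [comp_apply]
  split
  · subst ‹g = k›; exact DirectSum.decompose_of_mem_same 𝒜 hx
  · exact DirectSum.decompose_of_mem_ne 𝒜 hx ‹¬ g = k›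

/-- total top degree function, junk value `0` at `0`. -/
noncomputable def deg (𝒜 : Γ → AddSubgroup D) [DirectSum.Decomposition 𝒜] (x : D) : Γ :=
  letI := Classical.dec (x ≠ 0)
  if hx : x ≠ 0 then (supp 𝒜 x).max' (supp_nonempty hx) else 0

omit [IsDomain D] in
lemma deg_eq {x : D} (hx : x ≠ 0) : deg 𝒜 x = (supp 𝒜 x).max' (supp_nonempty hx) := dif_pos hx

omit [IsDomain D] in
lemma comp_deg {x : D} (hx : x ≠ 0) : comp 𝒜 (deg 𝒜 x) x ≠ 0 := by
  rw [← mem_supp_iff, deg_eq hx]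
  exact (supp 𝒜 x).max'_mem _

omit [IsDomain D] in
lemma le_deg {x : D} {k : Γ} (hk : comp 𝒜 k x ≠ 0) : k ≤ deg 𝒜 x := by
  have hx : x ≠ 0 := by rintro rfl; exact hk (map_zero _)
  rw [deg_eq hx]
  exact (supp 𝒜 x).le_max' k ((mem_supp_iff k x).mpr hk)

omit [IsDomain D] in
lemma comp_eq_zero_of_deg_lt {x : D} {k : Γ} (h : deg 𝒜 x < k) : comp 𝒜 k x = 0 := by
  by_contra hc
  exact absurd (le_deg hc) (not_le.mpr h)

omit [IsDomain D] in
lemma deg_of_mem {g : Γ} {x : D} (hx : x ∈ 𝒜 g) (hx0 : x ≠ 0) : deg 𝒜 x = g := by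
  have h1 : comp 𝒜 g x ≠ 0 := by rw [comp_of_mem hx, if_pos rfl]; exact hx0
  refine le_antisymm ?_ (le_deg h1)
  by_contra h
  exact comp_deg hx0 (by rw [comp_of_mem hx, if_neg (by intro he; exact h (le_of_eq he.symm))])

variable (hmul : ∀ g h : Γ, ∀ x ∈ 𝒜 g, ∀ y ∈ 𝒜 h, x * y ∈ 𝒜 (g + h))
include hmul

lemma comp_mul_top (x y : D) (hx : x ≠ 0) (hy : y ≠ 0) :
    comp 𝒜 (deg 𝒜 x + deg 𝒜 y) (x * y) = comp 𝒜 (deg 𝒜 x) x * comp 𝒜 (deg 𝒜 y) y ∧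
    ∀ k : Γ, deg 𝒜 x + deg 𝒜 y < k → comp 𝒜 k (x * y) = 0 := by
  have key : ∀ k : Γ, comp 𝒜 k (x * y) =
      ∑ g ∈ supp 𝒜 x, ∑ h ∈ supp 𝒜 y,
        if g + h = k then comp 𝒜 g x * comp 𝒜 h y else 0 := by
    intro k
    conv_lhs => rw [← sum_supp (𝒜 := 𝒜) x, ← sum_supp (𝒜 := 𝒜) y, Finset.sum_mul_sum]
    rw [map_sum]
    refine Finset.sum_congr rfl fun g hg => ?_
    rw [map_sum]
    refine Finset.sum_congr rfl fun h hh => ?_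
    exact comp_of_mem (hmul g h _ (comp_mem g x) _ (comp_mem h y))
  have coe_add : ∀ a b : Γ, ((a + b : Γ) : G) = (a : G) + (b : G) := fun a b => rfl
  constructor
  · rw [key]
    rw [Finset.sum_eq_single (deg 𝒜 x)]
    · rw [Finset.sum_eq_single (deg 𝒜 y)]
      · rw [if_pos rfl]
      · intro h hh hne
        rw [if_neg]
        intro hEq
        have h1 : h ≤ deg 𝒜 y := le_deg ((mem_supp_iff _ _).mp hh)
        have : h = deg 𝒜 y := by
          have := congrArg (Subtype.val) hEq
          apply Subtype.ext
          have : (deg 𝒜 x : G) + h = (deg 𝒜 x : G) + deg 𝒜 y := this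
          exact add_left_cancel this
        exact hne this
      · intro h
        exact absurd ((mem_supp_iff _ _).mpr (comp_deg hy)) h
    · intro g hg hne
      rw [Finset.sum_eq_zero]
      intro h hh
      rw [if_neg]
      intro hEq
      have h1 : g ≤ deg 𝒜 x := le_deg ((mem_supp_iff _ _).mp hg)
      have h2 : h ≤ deg 𝒜 y := le_deg ((mem_supp_iff _ _).mp hh)
      have hlt : g < deg 𝒜 x := lt_of_le_of_ne h1 hne
      have : (g : G) + h < (deg 𝒜 x : G) + deg 𝒜 y :=
        add_lt_add_of_lt_of_le hlt h2
      rw [← coe_add, ← coe_add, hEq] at this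
      exact lt_irrefl _ this
    · intro h
      exact absurd ((mem_supp_iff _ _).mpr (comp_deg hx)) h
  · intro k hk
    rw [key, Finset.sum_eq_zero]
    intro g hg
    rw [Finset.sum_eq_zero]
    intro h hh
    rw [if_neg]
    intro hEq
    have h1 : g ≤ deg 𝒜 x := le_deg ((mem_supp_iff _ _).mp hg)
    have h2 : h ≤ deg 𝒜 y := le_deg ((mem_supp_iff _ _).mp hh)
    have : g + h ≤ deg 𝒜 x + deg 𝒜 y := add_le_add h1 h2
    rw [hEq] at this
    exact absurd hk (not_lt.mpr this)

lemma deg_mul {x y : D} (hx : x ≠ 0) (hy : y ≠ 0) : deg 𝒜 (x * y) = deg 𝒜 x + deg 𝒜 y := by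
  obtain ⟨h1, h2⟩ := comp_mul_top hmul x y hx hy
  have hne : comp 𝒜 (deg 𝒜 x + deg 𝒜 y) (x * y) ≠ 0 := by
    rw [h1]; exact mul_ne_zero (comp_deg hx) (comp_deg hy)
  refine le_antisymm ?_ (le_deg hne)
  by_contra h
  exact comp_deg (mul_ne_zero hx hy) (h2 _ (not_le.mp h))

lemma deg_one : deg 𝒜 (1 : D) = 0 := by
  have h := deg_mul hmul (one_ne_zero (α := D)) (one_ne_zero (α := D))
  rw [mul_one] at h
  have : (deg 𝒜 (1 : D) : G) = (deg 𝒜 (1 : D) : G) + (deg 𝒜 (1 : D) : G) := congrArg Subtype.val h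
  have h0 : (deg 𝒜 (1 : D) : G) = 0 := by
    have h2 : (deg 𝒜 (1 : D) : G) + 0 = (deg 𝒜 (1 : D) : G) + (deg 𝒜 (1 : D) : G) := by
      rw [add_zero]; exact this
    exact (add_left_cancel h2).symm
  exact Subtype.ext h0

lemma deg_prod {ι : Type*} (s : Finset ι) (f : ι → D) (hf : ∀ i ∈ s, f i ≠ 0) :
    deg 𝒜 (∏ i ∈ s, f i) = ∑ i ∈ s, deg 𝒜 (f i) := by
  classical
  induction s using Finset.induction_on with
  | empty => simpa using deg_one hmul
  | insert _ _ hni ih =>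
    rename_i a s
    rw [Finset.prod_insert hni, Finset.sum_insert hni,
      deg_mul hmul (hf a (Finset.mem_insert_self a s))
        (Finset.prod_ne_zero_iff.mpr fun i hi => hf i (Finset.mem_insert_of_mem hi)),
      ih fun i hi => hf i (Finset.mem_insert_of_mem hi)]

end Aux

/-- If `G` is a totally ordered abelian group, `Γ` is the monoid of nonnegative elements of
`G`, and `D` is an integral domain equipped with a nontrivial `Γ`-grading (an internal
direct sum decomposition `D = ⊕_{g ∈ Γ} 𝒜 g` into additive subgroups with
`𝒜 g * 𝒜 h ⊆ 𝒜 (g + h)` and `𝒜 0 ≠ D`), then `D` is not Egyptian. -/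
theorem statement1 (G : Type*) [AddCommGroup G] [LinearOrder G] [IsOrderedAddMonoid G] [DecidableEq G]
    (Γ : AddSubmonoid G) (hΓ : ∀ g : G, g ∈ Γ ↔ 0 ≤ g)
    (D : Type u) [CommRing D] [IsDomain D]
    (𝒜 : Γ → AddSubgroup D)
    (hdirect : DirectSum.IsInternal 𝒜)
    (hmul : ∀ g h : Γ, ∀ x ∈ 𝒜 g, ∀ y ∈ 𝒜 h, x * y ∈ 𝒜 (g + h))
    (hnontriv : 𝒜 0 ≠ ⊤) :
    ¬ IsEgyptian D := by
  classical
  letI := hdirect.chooseDecomposition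
  intro hEg
  obtain ⟨x, hx⟩ : ∃ x : D, x ∉ 𝒜 0 := by
    by_contra h
    push_neg at h
    exact hnontriv ((AddSubgroup.eq_top_iff' (𝒜 0)).mpr h)
  obtain ⟨g, hg0, hgc⟩ : ∃ g : Γ, g ≠ 0 ∧ comp 𝒜 g x ≠ 0 := by
    by_contra h
    push_neg at h
    apply hx
    have hsub : supp 𝒜 x ⊆ {0} := by
      intro k hk
      rw [Finset.mem_singleton]
      by_contra hne
      exact (mem_supp_iff k x).mp hk (h k hne)
    have hxx : x = ∑ k ∈ ({0} : Finset Γ), comp 𝒜 k x := by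
      rw [← Finset.sum_subset hsub
        (fun k _ hk => by by_contra hc; exact hk ((mem_supp_iff k x).mpr hc))]
      exact (sum_supp x).symm
    rw [hxx, Finset.sum_singleton]
    exact comp_mem 0 x
  set d := comp 𝒜 g x with hd_def
  have hdmem : d ∈ 𝒜 g := comp_mem g x
  have hd0 : d ≠ 0 := hgc
  have hgpos : (0 : G) < (g : G) :=
    lt_of_le_of_ne ((hΓ g).mp g.2) (fun h => hg0 (Subtype.ext h.symm))
  obtain ⟨s, hs0, hs⟩ := hEg d hd0
  have hφinj : Function.Injective (algebraMap D (FractionRing D)) :=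
    IsFractionRing.injective D (FractionRing D)
  have hEq := hs (FractionRing D) (algebraMap D (FractionRing D)) hφinj
  set φ := algebraMap D (FractionRing D) with hφ_def
  have hP : (∏ i ∈ s, i) ≠ 0 := Finset.prod_ne_zero_iff.mpr hs0
  have hDeq : d * ∏ i ∈ s, i = ∑ i ∈ s, ∏ j ∈ s.erase i, j := by
    apply hφinj
    rw [map_mul, map_sum, hEq, Finset.sum_mul]
    refine Finset.sum_congr rfl fun i hi => ?_
    have hne : φ i ≠ 0 := fun h0 => hs0 i hi (hφinj (h0.trans (map_zero φ).symm))
    rw [← Finset.mul_prod_erase s (fun i => i) hi, map_mul, inv_mul_cancel_left₀ hne]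
  set T : Γ := g + ∑ i ∈ s, deg 𝒜 i with hT_def
  have hdegL : deg 𝒜 (d * ∏ i ∈ s, i) = T := by
    rw [deg_mul hmul hd0 hP, deg_of_mem hdmem hd0, deg_prod hmul s (fun i => i) hs0]
  have h1 : comp 𝒜 T (d * ∏ i ∈ s, i) ≠ 0 := hdegL ▸ comp_deg (mul_ne_zero hd0 hP)
  have h2 : comp 𝒜 T (∑ i ∈ s, ∏ j ∈ s.erase i, j) = 0 := by
    rw [map_sum]
    refine Finset.sum_eq_zero fun i hi => ?_
    apply comp_eq_zero_of_deg_lt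
    rw [deg_prod hmul _ (fun j => j) (fun j hj => hs0 j (Finset.mem_of_mem_erase hj))]
    rw [← Subtype.coe_lt_coe, hT_def]
    push_cast [AddSubmonoidClass.coe_finset_sum]
    calc (∑ j ∈ s.erase i, (deg 𝒜 j : G)) ≤ ∑ j ∈ s, (deg 𝒜 j : G) :=
          Finset.sum_le_sum_of_subset_of_nonneg (Finset.erase_subset i s)
            (fun j _ _ => (hΓ _).mp (deg 𝒜 j).2)
      _ < (g : G) + ∑ j ∈ s, (deg 𝒜 j : G) := lt_add_of_pos_left _ hgpos
  rw [hDeq] at h1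
  exact h1 h2
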